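/- arXiv:1505.06286 — 3 statements merged into one kernel-verified Lean document; each statement's English description precedes it below -/
import Mathlib

section
/- In the SpecialRM instance constructed from a finite simple graph G' = (V', E') with minimum degree at least 1 and price p > 0, the adoption set admits a purely combinatorial characterization: for every seed set A ⊆ V', σ_p(A) is the least subset S ⊆ V' (under inclusion) such that A ⊆ S and every vertex v all of whose neighbors in G' lie in S belongs to S. In particular, a vertex v ∉ A crosses the adoption threshold relative to a set S if and only if all neighbors of v are in S. -/
open Finset
open scoped Classical

/-- A set `S` is adoption-closed for seed set `A` at price `p`. The adoption set `σ_p(A)`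
is the least such set. -/
def AdoptClosed {V : Type*} [DecidableEq V]
    (χ : V → ℝ) (w : V → V → ℝ) (F : ℝ → ℝ) (p : ℝ) (A S : Finset V) : Prop :=
  A ⊆ S ∧ ∀ v, p ≤ χ v + F (∑ u ∈ S.erase v, w u v) → v ∈ S

/-- The weights of the SpecialRM instance constructed from a simple graph `G` at price `p`:
`w u v = p / deg v` if `{u,v}` is an edge, and `0` otherwise. -/
noncomputable def srmW {V : Type*} [Fintype V] (G : SimpleGraph V) [DecidableRel G.Adj]
    (p : ℝ) (u v : V) : ℝ :=
  if G.Adj u v then p / G.degree v else 0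

lemma srmW_key {V : Type*} [Fintype V] [DecidableEq V]
    (G : SimpleGraph V) [DecidableRel G.Adj]
    (hdeg : ∀ v, 1 ≤ G.degree v) (p : ℝ) (hp : 0 < p) (S : Finset V) (v : V) :
    p ≤ ∑ u ∈ S.erase v, srmW G p u v ↔ ∀ u, G.Adj u v → u ∈ S := by
  have hd0 : (0 : ℝ) < (G.degree v : ℝ) := by
    exact_mod_cast lt_of_lt_of_le one_pos (hdeg v)
  have hfe : (S.erase v).filter (fun u => G.Adj u v) = S.filter (fun u => G.Adj u v) := by
    ext u
    simp only [Finset.mem_filter, Finset.mem_erase]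
    constructor
    · rintro ⟨⟨_, hu⟩, ha⟩; exact ⟨hu, ha⟩
    · rintro ⟨hu, ha⟩; exact ⟨⟨G.ne_of_adj ha, hu⟩, ha⟩
  have hsum : ∑ u ∈ S.erase v, srmW G p u v
      = ((S.filter (fun u => G.Adj u v)).card : ℝ) * (p / G.degree v) := by
    unfold srmW
    rw [← Finset.sum_filter, hfe, Finset.sum_const, nsmul_eq_mul]
  rw [hsum]
  have hsub : S.filter (fun u => G.Adj u v) ⊆ G.neighborFinset v := by
    intro u hu
    rw [SimpleGraph.mem_neighborFinset]
    exact ((Finset.mem_filter.mp hu).2).symm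
  have hcard : (S.filter (fun u => G.Adj u v)).card ≤ G.degree v := by
    rw [← SimpleGraph.card_neighborFinset_eq_degree]
    exact Finset.card_le_card hsub
  constructor
  · intro h u hadj
    -- from p ≤ card * (p/d) deduce d ≤ card hence filter = neighborFinset
    have h1 : (G.degree v : ℝ) ≤ ((S.filter (fun u => G.Adj u v)).card : ℝ) := by
      have := h
      rw [mul_div_assoc'] at this
      rw [le_div_iff₀ hd0] at this
      nlinarith [this, hp]
    have h2 : G.degree v ≤ (S.filter (fun u => G.Adj u v)).card := by exact_mod_cast h1
    have heq : S.filter (fun u => G.Adj u v) = G.neighborFinset v := by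
      apply Finset.eq_of_subset_of_card_le hsub
      rw [SimpleGraph.card_neighborFinset_eq_degree]; exact h2
    have : u ∈ S.filter (fun u => G.Adj u v) := by
      rw [heq, SimpleGraph.mem_neighborFinset]; exact hadj.symm
    exact (Finset.mem_filter.mp this).1
  · intro h
    have hsub2 : G.neighborFinset v ⊆ S.filter (fun u => G.Adj u v) := by
      intro u hu
      rw [SimpleGraph.mem_neighborFinset] at hu
      exact Finset.mem_filter.mpr ⟨h u hu.symm, hu.symm⟩
    have h2 : (G.degree v : ℝ) ≤ ((S.filter (fun u => G.Adj u v)).card : ℝ) := by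
      have := Finset.card_le_card hsub2
      rw [SimpleGraph.card_neighborFinset_eq_degree] at this
      exact_mod_cast this
    calc p = (G.degree v : ℝ) * (p / G.degree v) := by field_simp
      _ ≤ _ := by
          apply mul_le_mul_of_nonneg_right h2
          positivity

/-- In the SpecialRM instance (χ ≡ 0, F = id), the adoption set has a
purely combinatorial characterization: σ_p(A) is the least set containing A and closed
under adding any vertex all of whose neighbors are already in the set; in particular, a
vertex crosses the adoption threshold relative to S iff all its neighbors lie in S. -/
theorem specialRM_adoption_combinatorial
    {V : Type*} [Fintype V] [DecidableEq V]
    (G : SimpleGraph V) [DecidableRel G.Adj]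
    (hdeg : ∀ v, 1 ≤ G.degree v) (p : ℝ) (hp : 0 < p) :
    (∀ A σ : Finset V,
      IsLeast {S : Finset V | AdoptClosed (fun _ => (0 : ℝ)) (srmW G p) id p A S} σ ↔
      IsLeast {S : Finset V | A ⊆ S ∧ ∀ v, (∀ u, G.Adj u v → u ∈ S) → v ∈ S} σ) ∧
    (∀ (S : Finset V) (v : V),
      p ≤ (fun _ => (0 : ℝ)) v + id (∑ u ∈ S.erase v, srmW G p u v) ↔
      ∀ u, G.Adj u v → u ∈ S) := by
  have key := srmW_key G hdeg p hp
  have hset : ∀ A : Finset V,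
      {S : Finset V | AdoptClosed (fun _ => (0 : ℝ)) (srmW G p) id p A S}
      = {S : Finset V | A ⊆ S ∧ ∀ v, (∀ u, G.Adj u v → u ∈ S) → v ∈ S} := by
    intro A
    ext S
    simp only [Set.mem_setOf_eq, AdoptClosed, id_eq, zero_add]
    constructor
    · rintro ⟨h1, h2⟩
      exact ⟨h1, fun v hv => h2 v ((key S v).mpr hv)⟩
    · rintro ⟨h1, h2⟩
      exact ⟨h1, fun v hv => h2 v ((key S v).mp hv)⟩
  constructor
  · intro A σ
    rw [hset A]
  · intro S v
    simpa using key S v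
end

section
/- In the SpecialRM instance constructed from a finite simple graph G' = (V', E') with minimum degree at least 1 and price p > 0, if {u,v} is an edge of G' and the seed set S ⊆ V' contains neither u nor v, then u ∉ σ_p(S) and v ∉ σ_p(S); in particular σ_p(S) ≠ V'. -/
open Finset
open scoped Classical

lemma srm_sum_lt {V : Type*} [Fintype V] [DecidableEq V]
    (G : SimpleGraph V) [DecidableRel G.Adj]
    (hdeg : ∀ v, 1 ≤ G.degree v) (p : ℝ) (hp : 0 < p) (x a : V) (hax : G.Adj a x)
    (A : Finset V) (ha : a ∉ A) :
    ∑ y ∈ A, srmW G p y x < p := by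
  have hdx : (0:ℝ) < G.degree x := by
    exact_mod_cast Nat.lt_of_lt_of_le Nat.zero_lt_one (hdeg x)
  have hfilter : A.filter (fun y => G.Adj y x) ⊆ (G.neighborFinset x).erase a := by
    intro y hy
    simp only [Finset.mem_filter] at hy
    refine Finset.mem_erase.mpr ⟨?_, ?_⟩
    · rintro rfl; exact ha hy.1
    · exact (SimpleGraph.mem_neighborFinset _ _ _).mpr hy.2.symm
  have hcard : (A.filter (fun y => G.Adj y x)).card ≤ G.degree x - 1 := by
    have := Finset.card_le_card hfilter
    rwa [Finset.card_erase_of_mem ((SimpleGraph.mem_neighborFinset _ _ _).mpr hax.symm),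
      SimpleGraph.card_neighborFinset_eq_degree] at this
  calc ∑ y ∈ A, srmW G p y x
      = ∑ y ∈ A.filter (fun y => G.Adj y x), (p / G.degree x) := by
        simp only [srmW]; exact (Finset.sum_filter _ _).symm
    _ = ((A.filter (fun y => G.Adj y x)).card : ℝ) * (p / G.degree x) := by
        rw [Finset.sum_const, nsmul_eq_mul]
    _ ≤ ((G.degree x - 1 : ℕ) : ℝ) * (p / G.degree x) := by
        apply mul_le_mul_of_nonneg_right _ (le_of_lt (div_pos hp hdx))
        exact_mod_cast hcard
    _ < (G.degree x : ℝ) * (p / G.degree x) := by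
        apply mul_lt_mul_of_pos_right _ (div_pos hp hdx)
        exact_mod_cast Nat.sub_lt (hdeg x) Nat.one_pos
    _ = p := by field_simp

/-- In the SpecialRM instance, if {u,v} is an edge and the seed set S
contains neither u nor v, then neither u nor v adopts; in particular σ_p(S) ≠ V. -/
theorem specialRM_uncovered_edge_not_adopted
    {V : Type*} [Fintype V] [DecidableEq V]
    (G : SimpleGraph V) [DecidableRel G.Adj]
    (hdeg : ∀ v, 1 ≤ G.degree v) (p : ℝ) (hp : 0 < p)
    (u v : V) (huv : G.Adj u v)
    (S : Finset V) (hu : u ∉ S) (hv : v ∉ S) (σ : Finset V)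
    (hσ : IsLeast {T : Finset V | AdoptClosed (fun _ => (0 : ℝ)) (srmW G p) id p S T} σ) :
    u ∉ σ ∧ v ∉ σ ∧ σ ≠ Finset.univ := by
  classical
  obtain ⟨⟨hSσ, hclosed⟩, hleast⟩ := hσ
  set T : Finset V := (σ.erase u).erase v with hT
  have hTσ : T ⊆ σ := (Finset.erase_subset _ _).trans (Finset.erase_subset _ _)
  have huT : u ∉ T := fun h => (Finset.mem_erase.mp (Finset.mem_erase.mp h).2).1 rfl
  have hvT : v ∉ T := fun h => (Finset.mem_erase.mp h).1 rfl
  have hw0 : ∀ a b, 0 ≤ srmW G p a b := by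
    intro a b; unfold srmW; split
    · exact div_nonneg hp.le (Nat.cast_nonneg _)
    · exact le_refl _
  have hclosedT : AdoptClosed (fun _ => (0:ℝ)) (srmW G p) id p S T := by
    constructor
    · intro x hx
      exact Finset.mem_erase.mpr ⟨fun h => hv (h ▸ hx),
        Finset.mem_erase.mpr ⟨fun h => hu (h ▸ hx), hSσ hx⟩⟩
    · intro x hx
      simp only [zero_add, id] at hx
      have hxu : x ≠ u := by
        intro h; subst h
        have := srm_sum_lt G hdeg p hp x v huv.symm (T.erase x)
          (fun h => hvT (Finset.mem_of_mem_erase h))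
        linarith
      have hxv : x ≠ v := by
        intro h; subst h
        have := srm_sum_lt G hdeg p hp x u huv (T.erase x)
          (fun h => huT (Finset.mem_of_mem_erase h))
        linarith
      have hxσ : x ∈ σ := by
        apply hclosed
        simp only [zero_add, id]
        refine le_trans hx (Finset.sum_le_sum_of_subset_of_nonneg ?_ ?_)
        · exact Finset.erase_subset_erase _ hTσ
        · intro y _ _; exact hw0 y x
      exact Finset.mem_erase.mpr ⟨hxv, Finset.mem_erase.mpr ⟨hxu, hxσ⟩⟩
  have hσT : σ ⊆ T := hleast hclosedT
  refine ⟨fun h => huT (hσT h), fun h => hvT (hσT h), fun h => huT (hσT (h ▸ Finset.mem_univ u))⟩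
end

section
/- (Correctness of the reduction in Theorem 1.) In the SpecialRM instance constructed from a finite simple graph G' = (V', E') with minimum degree at least 1 and price p > 0, a set S ⊆ V' satisfies σ_p(S) = V' if and only if S is a vertex cover of G'. -/
open Finset
open scoped Classical

lemma srmW_nonneg {V : Type*} [Fintype V] (G : SimpleGraph V) [DecidableRel G.Adj]
    {p : ℝ} (hp : 0 < p) (u v : V) : 0 ≤ srmW G p u v := by
  unfold srmW
  split
  · positivity
  · exact le_refl 0

lemma sum_srmW_nbr {V : Type*} [Fintype V] [DecidableEq V] (G : SimpleGraph V)
    [DecidableRel G.Adj] (hdeg : ∀ v, 1 ≤ G.degree v) (p : ℝ) (v : V) :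
    ∑ u ∈ G.neighborFinset v, srmW G p u v = p := by
  have hconst : ∀ u ∈ G.neighborFinset v, srmW G p u v = p / G.degree v := by
    intro u hu
    rw [SimpleGraph.mem_neighborFinset] at hu
    simp [srmW, hu.symm]
  rw [Finset.sum_congr rfl hconst, Finset.sum_const, ← SimpleGraph.card_neighborFinset_eq_degree]
  have hd : (G.degree v : ℝ) ≠ 0 := by
    have := hdeg v
    positivity
  rw [SimpleGraph.card_neighborFinset_eq_degree]
  rw [nsmul_eq_mul]
  field_simp

lemma sum_srmW_erase {V : Type*} [Fintype V] [DecidableEq V] (G : SimpleGraph V)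
    [DecidableRel G.Adj] (hdeg : ∀ v, 1 ≤ G.degree v) (p : ℝ) (v : V) :
    ∑ u ∈ Finset.univ.erase v, srmW G p u v = p := by
  have heq : ∑ u ∈ G.neighborFinset v, srmW G p u v
      = ∑ u ∈ Finset.univ.erase v, srmW G p u v := by
    apply Finset.sum_subset
    · intro u hu
      rw [SimpleGraph.mem_neighborFinset] at hu
      exact Finset.mem_erase.2 ⟨hu.ne', Finset.mem_univ u⟩
    · intro u _ hu
      rw [SimpleGraph.mem_neighborFinset] at hu
      simp only [srmW]
      rw [if_neg (fun h : G.Adj u v => hu h.symm)]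
  rw [← heq, sum_srmW_nbr G hdeg p v]

/-- Correctness of the reduction in Theorem 1: in the SpecialRM
instance, σ_p(S) = V if and only if S is a vertex cover of G. -/
theorem specialRM_adoption_univ_iff_vertexCover
    {V : Type*} [Fintype V] [DecidableEq V]
    (G : SimpleGraph V) [DecidableRel G.Adj]
    (hdeg : ∀ v, 1 ≤ G.degree v) (p : ℝ) (hp : 0 < p)
    (S : Finset V) (σ : Finset V)
    (hσ : IsLeast {T : Finset V | AdoptClosed (fun _ => (0 : ℝ)) (srmW G p) id p S T} σ) :
    σ = Finset.univ ↔ ∀ a b, G.Adj a b → a ∈ S ∨ b ∈ S := by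
  obtain ⟨⟨hSσ, hclosed⟩, hleast⟩ := hσ
  constructor
  · -- σ = univ → vertex cover
    intro hu a b hab
    by_contra h
    push_neg at h
    obtain ⟨ha, hb⟩ := h
    set T : Finset V := (Finset.univ.erase a).erase b with hT
    have haT : a ∉ T := fun h => (Finset.mem_erase.1 (Finset.mem_of_mem_erase h)).1 rfl
    have hbT : b ∉ T := fun h => (Finset.mem_erase.1 h).1 rfl
    have hkey : ∀ v x, G.Adj x v → T ⊆ (Finset.univ.erase v).erase x →
        ∑ u ∈ T, srmW G p u v < p := by
      intro v x hadj hsub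
      have hxv : x ∈ Finset.univ.erase v := Finset.mem_erase.2 ⟨hadj.ne, Finset.mem_univ x⟩
      have h1 : ∑ u ∈ (Finset.univ.erase v).erase x, srmW G p u v
          = p - srmW G p x v := by
        rw [Finset.sum_erase_eq_sub hxv, sum_srmW_erase G hdeg p v]
      have h2 : 0 < srmW G p x v := by
        have hd : 0 < (G.degree v : ℝ) := by exact_mod_cast hdeg v
        simp only [srmW, if_pos hadj]
        positivity
      calc ∑ u ∈ T, srmW G p u v ≤ ∑ u ∈ (Finset.univ.erase v).erase x, srmW G p u v :=
            Finset.sum_le_sum_of_subset_of_nonneg hsub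
              (fun u _ _ => srmW_nonneg G hp u v)
        _ = p - srmW G p x v := h1
        _ < p := by linarith
    have hTclosed : AdoptClosed (fun _ => (0 : ℝ)) (srmW G p) id p S T := by
      constructor
      · intro v hv
        exact Finset.mem_erase.2 ⟨fun h => hb (h ▸ hv),
          Finset.mem_erase.2 ⟨fun h => ha (h ▸ hv), Finset.mem_univ v⟩⟩
      · intro v hv
        by_contra hvT
        simp only [id] at hv
        have hvab : v = a ∨ v = b := by
          by_contra hc
          push_neg at hc
          exact hvT (Finset.mem_erase.2 ⟨hc.2, Finset.mem_erase.2 ⟨hc.1, Finset.mem_univ v⟩⟩)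
        have hTe : T.erase v = T := Finset.erase_eq_of_notMem hvT
        rw [hTe] at hv
        rcases hvab with rfl | rfl
        · have := hkey v b hab.symm (by
            intro u hu
            simp only [hT, Finset.mem_erase, Finset.mem_univ, and_true] at hu ⊢
            tauto)
          linarith
        · have hsub : T ⊆ (Finset.univ.erase v).erase a := by
            intro u hu
            simp only [hT, Finset.mem_erase, Finset.mem_univ, and_true] at hu ⊢
            tauto
          have := hkey v a hab hsub
          linarith
    have := hleast hTclosed
    exact haT (this (hu ▸ Finset.mem_univ a))
  · -- vertex cover → σ = univ
    intro hcov
    apply Finset.eq_univ_of_forall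
    intro v
    by_cases hvS : v ∈ S
    · exact hSσ hvS
    · apply hclosed v
      simp only [id]
      have hsub : G.neighborFinset v ⊆ σ.erase v := by
        intro u hu
        rw [SimpleGraph.mem_neighborFinset] at hu
        refine Finset.mem_erase.2 ⟨hu.ne', hSσ ?_⟩
        rcases hcov u v hu.symm with h | h
        · exact h
        · exact absurd h hvS
      have : p ≤ ∑ u ∈ σ.erase v, srmW G p u v := by
        calc p = ∑ u ∈ G.neighborFinset v, srmW G p u v := (sum_srmW_nbr G hdeg p v).symm
          _ ≤ ∑ u ∈ σ.erase v, srmW G p u v :=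
            Finset.sum_le_sum_of_subset_of_nonneg hsub
              (fun u _ _ => srmW_nonneg G hp u v)
      linarith
end
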